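/- Let T : X → Y be globally Lipschitz from a separable Banach space X into a separable reflexive Banach space Y. If x_n → x in X, L_n ∈ ∂_B^{sw} T(x_n) for each n (the strong-weak Bouligand subdifferential), and L_n → L in the weak operator topology, then L ∈ ∂_B^{sw} T(x). -/

import Mathlib

open Filter Topology

section Aux

open NormedSpace TopologicalSpace

/-- A normed space with separable dual is separable. -/
lemma BouligandSW.sep_of_dual_sep (E : Type*) [NormedAddCommGroup E] [NormedSpace ℝ E]
    [SeparableSpace (StrongDual ℝ E)] : SeparableSpace E := by
  obtain ⟨g, hg⟩ := exists_dense_seq (StrongDual ℝ E)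
  have hx : ∀ n, ∃ v : E, ‖v‖ ≤ 1 ∧ ‖g n‖ / 2 ≤ ‖(g n) v‖ := by
    intro n
    rcases eq_or_ne (g n) 0 with h0 | h0
    · exact ⟨0, by simp [h0]⟩
    · have hpos : 0 < ‖g n‖ := norm_pos_iff.mpr h0
      obtain ⟨v, hv1, hv2⟩ := (g n).exists_lt_apply_of_lt_opNorm (r := ‖g n‖ / 2) (by linarith)
      exact ⟨v, hv1.le, hv2.le⟩
  choose x hx1 hx2 using hx
  set M : Submodule ℝ E := (Submodule.span ℝ (Set.range x)).topologicalClosure with hM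
  have hMtop : M = ⊤ := by
    by_contra hne
    obtain ⟨y, hy⟩ : ∃ y : E, y ∉ M := by
      by_contra hc
      push_neg at hc
      exact hne (Submodule.eq_top_iff'.mpr hc)
    obtain ⟨f, u, hfu, huy⟩ := geometric_hahn_banach_closed_point
      (M.convex) (Submodule.isClosed_topologicalClosure _) hy
    have hfM : ∀ a ∈ M, f a = 0 := by
      intro a ha
      by_contra hfa
      have h1 : ∀ t : ℝ, t * f a < u := by
        intro t
        have := hfu (t • a) (M.smul_mem t ha)
        simpa using this
      rcases lt_or_gt_of_ne hfa with hneg | hpos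
      · have := h1 ((u + 1) / f a)
        rw [div_mul_cancel₀ _ hfa] at this; linarith
      · have := h1 ((u + 1) / f a)
        rw [div_mul_cancel₀ _ hfa] at this; linarith
    have hu0 : 0 < u := by
      have := hfu 0 (M.zero_mem); simpa using this
    have hf0 : f ≠ 0 := by
      intro h; rw [h] at huy; simp at huy; linarith
    have hfpos : 0 < ‖f‖ := norm_pos_iff.mpr hf0
    obtain ⟨n, hn⟩ : ∃ n, dist (g n) f < ‖f‖ / 8 := by
      obtain ⟨n, hn⟩ := Metric.denseRange_iff.mp hg f (‖f‖ / 8) (by linarith)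
      exact ⟨n, by rwa [dist_comm] at hn⟩
    rw [dist_eq_norm] at hn
    have hgn : ‖f‖ - ‖f‖ / 8 ≤ ‖g n‖ := by
      have h2 := abs_norm_sub_norm_le (g n) f
      rw [abs_le] at h2
      linarith [h2.1]
    have hxn : f (x n) = 0 := hfM (x n)
      (Submodule.le_topologicalClosure _ (Submodule.subset_span (Set.mem_range_self n)))
    have hb : ‖(g n) (x n)‖ ≤ ‖f‖ / 8 := by
      have : (g n) (x n) = (g n - f) (x n) := by simp [hxn]
      rw [this]
      calc ‖(g n - f) (x n)‖ ≤ ‖g n - f‖ * ‖x n‖ := (g n - f).le_opNorm _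
        _ ≤ ‖g n - f‖ * 1 := mul_le_mul_of_nonneg_left (hx1 n) (norm_nonneg _)
        _ ≤ ‖f‖ / 8 := by rw [mul_one]; exact hn.le
    have := hx2 n
    linarith
  have hsep : IsSeparable (M : Set E) :=
    ((Set.countable_range x).isSeparable.span).closure
  rw [hMtop] at hsep
  exact isSeparable_univ_iff.mp (by simpa using hsep)

/-- The dual of a separable reflexive space is separable. -/
lemma BouligandSW.dual_sep {Y : Type*} [NormedAddCommGroup Y] [NormedSpace ℝ Y]
    [SeparableSpace Y]
    (hrefl : Function.Surjective ⇑(NormedSpace.inclusionInDoubleDual ℝ Y)) :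
    SeparableSpace (StrongDual ℝ Y) := by
  haveI : SeparableSpace (StrongDual ℝ (StrongDual ℝ Y)) :=
    hrefl.denseRange.separableSpace (inclusionInDoubleDual ℝ Y).continuous
  exact BouligandSW.sep_of_dual_sep (StrongDual ℝ Y)

/-- A Gâteaux derivative of a `K`-Lipschitz map satisfies `‖D h‖ ≤ K * ‖h‖`. -/
lemma BouligandSW.gateaux_bound {X Y : Type*} [NormedAddCommGroup X] [NormedSpace ℝ X]
    [NormedAddCommGroup Y] [NormedSpace ℝ Y]
    {T : X → Y} {K : NNReal} (hT : LipschitzWith K T) {u : X} {D : X →L[ℝ] Y}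
    (hG : ∀ h : X, Tendsto (fun t : ℝ => t⁻¹ • (T (u + t • h) - T u)) (𝓝[≠] 0) (𝓝 (D h)))
    (h : X) : ‖D h‖ ≤ K * ‖h‖ := by
  have hbd : ∀ᶠ t in 𝓝[≠] (0:ℝ), ‖t⁻¹ • (T (u + t • h) - T u)‖ ≤ K * ‖h‖ := by
    filter_upwards [self_mem_nhdsWithin] with t ht
    have ht0 : t ≠ 0 := ht
    have h1 : ‖T (u + t • h) - T u‖ ≤ K * (|t| * ‖h‖) := by
      have := hT.dist_le_mul (u + t • h) u
      rw [dist_eq_norm, dist_eq_norm] at this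
      simpa [norm_smul, abs_mul] using this
    rw [norm_smul, norm_inv, Real.norm_eq_abs]
    calc |t|⁻¹ * ‖T (u + t • h) - T u‖ ≤ |t|⁻¹ * (K * (|t| * ‖h‖)) :=
          mul_le_mul_of_nonneg_left h1 (by positivity)
      _ = K * ‖h‖ := by field_simp
  exact le_of_tendsto (hG h).norm hbd

/-- A WOT limit of operators with `‖D n h‖ ≤ K * ‖h‖` satisfies the same bound. -/
lemma BouligandSW.wot_bound {X Y : Type*} [NormedAddCommGroup X] [NormedSpace ℝ X]
    [NormedAddCommGroup Y] [NormedSpace ℝ Y]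
    {D : ℕ → X →L[ℝ] Y} {L : X →L[ℝ] Y} {K : ℝ} (hK : 0 ≤ K)
    (hb : ∀ n (h : X), ‖D n h‖ ≤ K * ‖h‖)
    (hc : ∀ (h : X) (f : Y →L[ℝ] ℝ), Tendsto (fun n => f ((D n) h)) atTop (𝓝 (f (L h))))
    (h : X) : ‖L h‖ ≤ K * ‖h‖ := by
  apply norm_le_dual_bound ℝ (L h) (by positivity)
  intro f
  have hn : ∀ n, ‖f (D n h)‖ ≤ K * ‖h‖ * ‖f‖ := fun n => by
    calc ‖f (D n h)‖ ≤ ‖f‖ * ‖D n h‖ := f.le_opNorm _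
      _ ≤ ‖f‖ * (K * ‖h‖) := mul_le_mul_of_nonneg_left (hb n h) (norm_nonneg _)
      _ = K * ‖h‖ * ‖f‖ := by ring
  exact le_of_tendsto (hc h f).norm (Eventually.of_forall hn)

end Aux

/-- Gâteaux differentiability of `T` at `x` with (bounded linear) derivative `L`. -/
def GateauxAt {X Y : Type*} [NormedAddCommGroup X] [NormedSpace ℝ X]
    [NormedAddCommGroup Y] [NormedSpace ℝ Y] (T : X → Y) (x : X) (L : X →L[ℝ] Y) : Prop :=
  ∀ h : X, Tendsto (fun t : ℝ => t⁻¹ • (T (x + t • h) - T x)) (𝓝[≠] 0) (𝓝 (L h))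

/-- Convergence in the weak operator topology of a sequence of operators. -/
def WOTConv {X Y : Type*} [NormedAddCommGroup X] [NormedSpace ℝ X]
    [NormedAddCommGroup Y] [NormedSpace ℝ Y]
    (D : ℕ → X →L[ℝ] Y) (L : X →L[ℝ] Y) : Prop :=
  ∀ (h : X) (f : Y →L[ℝ] ℝ), Tendsto (fun n => f ((D n) h)) atTop (𝓝 (f (L h)))

/-- The strong-weak Bouligand subdifferential of `T` at `x`: limits in the weak operator
topology of Gâteaux derivatives `T'(x_m)` along sequences `x_m → x` of Gâteaux points. -/
def BouligandSW {X Y : Type*} [NormedAddCommGroup X] [NormedSpace ℝ X]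
    [NormedAddCommGroup Y] [NormedSpace ℝ Y] (T : X → Y) (x : X) : Set (X →L[ℝ] Y) :=
  {L | ∃ (u : ℕ → X) (D : ℕ → X →L[ℝ] Y),
    (∀ m, GateauxAt T (u m) (D m)) ∧ Tendsto u atTop (𝓝 x) ∧ WOTConv D L}

/-- **Closedness of the strong-weak Bouligand subdifferential.**
Let `T : X → Y` be globally Lipschitz from a separable Banach space `X` into a
separable reflexive Banach space `Y`.  If `x n → x` in `X`, `L n ∈ ∂_B^{sw} T (x n)`
for each `n`, and `L n → L` in the weak operator topology, then `L ∈ ∂_B^{sw} T x`. -/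
theorem BouligandSW_closed
    {X Y : Type*} [NormedAddCommGroup X] [NormedSpace ℝ X] [CompleteSpace X]
    [TopologicalSpace.SeparableSpace X]
    [NormedAddCommGroup Y] [NormedSpace ℝ Y] [CompleteSpace Y]
    [TopologicalSpace.SeparableSpace Y]
    (hrefl : Function.Surjective ⇑(NormedSpace.inclusionInDoubleDual ℝ Y))
    (T : X → Y) (K : NNReal) (hT : LipschitzWith K T)
    (x : ℕ → X) (x₀ : X) (L : ℕ → X →L[ℝ] Y) (L₀ : X →L[ℝ] Y)
    (hx : Tendsto x atTop (𝓝 x₀))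
    (hL : ∀ n, L n ∈ BouligandSW T (x n))
    (hconv : WOTConv L L₀) :
    L₀ ∈ BouligandSW T x₀ := by
  classical
  haveI : TopologicalSpace.SeparableSpace (StrongDual ℝ Y) := BouligandSW.dual_sep hrefl
  obtain ⟨S, hS⟩ := TopologicalSpace.exists_dense_seq X
  obtain ⟨F, hF⟩ := TopologicalSpace.exists_dense_seq (StrongDual ℝ Y)
  choose u D hG hu hW using hL
  -- norm bounds
  have hDb : ∀ n m (h : X), ‖D n m h‖ ≤ K * ‖h‖ := fun n m h =>
    BouligandSW.gateaux_bound hT (hG n m) h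
  have hLb : ∀ n (h : X), ‖L n h‖ ≤ K * ‖h‖ := fun n h =>
    BouligandSW.wot_bound (K.coe_nonneg) (hDb n) (hW n) h
  have hL0b : ∀ h : X, ‖L₀ h‖ ≤ K * ‖h‖ := fun h =>
    BouligandSW.wot_bound (K.coe_nonneg) hLb hconv h
  -- diagonal selection
  have hsel : ∀ n : ℕ, ∃ m : ℕ, dist (u n m) (x n) < 1/(n+1) ∧
      ∀ i ∈ Finset.range (n+1), ∀ j ∈ Finset.range (n+1),
        dist (F j (D n m (S i))) (F j (L n (S i))) < 1/(n+1) := by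
    intro n
    have hpos : (0:ℝ) < 1/(n+1) := by positivity
    have h1 : ∀ᶠ m in atTop, dist (u n m) (x n) < 1/(n+1) :=
      Metric.tendsto_nhds.mp (hu n) _ hpos
    have h2 : ∀ᶠ m in atTop, ∀ i ∈ Finset.range (n+1), ∀ j ∈ Finset.range (n+1),
        dist (F j (D n m (S i))) (F j (L n (S i))) < 1/(n+1) := by
      rw [eventually_all_finset]
      intro i _
      rw [eventually_all_finset]
      intro j _
      exact Metric.tendsto_nhds.mp (hW n (S i) (F j)) _ hpos
    exact (h1.and h2).exists
  choose m hm1 hm2 using hsel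
  refine ⟨fun n => u n (m n), fun n => D n (m n), fun n => hG n (m n), ?_, ?_⟩
  · -- convergence of the points
    rw [tendsto_iff_dist_tendsto_zero]
    apply squeeze_zero (fun n => dist_nonneg)
      (g := fun n => 1/(n+1) + dist (x n) x₀)
      (fun n => le_trans (dist_triangle _ (x n) _) (add_le_add_left (hm1 n).le _))
    have hd : Tendsto (fun n => dist (x n) x₀) atTop (𝓝 0) :=
      tendsto_iff_dist_tendsto_zero.mp hx
    have h1 : Tendsto (fun n : ℕ => 1/((n:ℝ)+1)) atTop (𝓝 0) :=
      tendsto_one_div_add_atTop_nhds_zero_nat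
    simpa using h1.add hd
  · -- WOT convergence
    intro h f
    rw [Metric.tendsto_nhds]
    intro ε hε
    set Kr : ℝ := (K : ℝ) with hKr
    have hKr0 : 0 ≤ Kr := K.coe_nonneg
    set C : ℝ := Kr * (‖f‖ + ‖h‖ + 1) + 1 with hC
    have hC1 : 1 ≤ C := by nlinarith [norm_nonneg f, norm_nonneg h]
    have hC0 : 0 < C := by linarith
    set δ : ℝ := min 1 (ε / (4 * C)) with hδ
    have hδ0 : 0 < δ := lt_min one_pos (by positivity)
    have hδ1 : δ ≤ 1 := min_le_left _ _
    have hδ2 : δ * C ≤ ε / 4 := by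
      have := min_le_right 1 (ε / (4 * C))
      calc δ * C ≤ (ε / (4 * C)) * C := mul_le_mul_of_nonneg_right this hC0.le
        _ = ε / 4 := by field_simp
    obtain ⟨i, hi⟩ := Metric.denseRange_iff.mp hS h δ hδ0
    obtain ⟨j, hj⟩ := Metric.denseRange_iff.mp hF f δ hδ0
    rw [dist_comm, dist_eq_norm] at hi
    rw [dist_eq_norm] at hj
    -- geometric approximation bound
    have hSi : ‖S i‖ ≤ ‖h‖ + 1 := by
      have := norm_le_norm_add_norm_sub' (S i) h
      have h2 : ‖S i - h‖ ≤ 1 := le_trans hi.le hδ1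
      calc ‖S i‖ ≤ ‖h‖ + ‖S i - h‖ := by
            have := norm_sub_norm_le (S i) h
            linarith [norm_sub_rev (S i) h ▸ this]
        _ ≤ ‖h‖ + 1 := by linarith
    have hgeo : ∀ A : X →L[ℝ] Y, (∀ y : X, ‖A y‖ ≤ Kr * ‖y‖) →
        dist (f (A h)) (F j (A (S i))) ≤ ε / 4 := by
      intro A hA
      rw [dist_eq_norm]
      have key : f (A h) - F j (A (S i)) = f (A (h - S i)) + (f - F j) (A (S i)) := by
        simp [map_sub]
      rw [key]
      have t1 : ‖f (A (h - S i))‖ ≤ ‖f‖ * (Kr * δ) := by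
        calc ‖f (A (h - S i))‖ ≤ ‖f‖ * ‖A (h - S i)‖ := f.le_opNorm _
          _ ≤ ‖f‖ * (Kr * ‖h - S i‖) := mul_le_mul_of_nonneg_left (hA _) (norm_nonneg _)
          _ ≤ ‖f‖ * (Kr * δ) := by
              have : ‖h - S i‖ ≤ δ := by
                rw [norm_sub_rev]; exact hi.le
              exact mul_le_mul_of_nonneg_left
                (mul_le_mul_of_nonneg_left this hKr0) (norm_nonneg _)
      have t2 : ‖(f - F j) (A (S i))‖ ≤ δ * (Kr * (‖h‖ + 1)) := by
        calc ‖(f - F j) (A (S i))‖ ≤ ‖f - F j‖ * ‖A (S i)‖ := (f - F j).le_opNorm _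
          _ ≤ δ * (Kr * (‖h‖ + 1)) := by
              have hAS : ‖A (S i)‖ ≤ Kr * (‖h‖ + 1) :=
                le_trans (hA _) (mul_le_mul_of_nonneg_left hSi hKr0)
              exact mul_le_mul hj.le hAS (norm_nonneg _) hδ0.le
      calc ‖f (A (h - S i)) + (f - F j) (A (S i))‖
          ≤ ‖f (A (h - S i))‖ + ‖(f - F j) (A (S i))‖ := norm_add_le _ _
        _ ≤ ‖f‖ * (Kr * δ) + δ * (Kr * (‖h‖ + 1)) := add_le_add t1 t2
        _ ≤ δ * C := by rw [hC]; nlinarith [norm_nonneg f, hδ0.le]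
        _ ≤ ε / 4 := hδ2
    -- eventual bounds
    have e1 : ∀ᶠ n in atTop, max i j ≤ n := eventually_ge_atTop _
    have e2 : ∀ᶠ n : ℕ in atTop, 1/((n:ℝ)+1) < ε / 8 :=
      (tendsto_one_div_add_atTop_nhds_zero_nat).eventually
        (eventually_lt_nhds (by positivity : (0:ℝ) < ε / 8))
    have e3 : ∀ᶠ n in atTop, dist (F j (L n (S i))) (F j (L₀ (S i))) < ε / 8 :=
      Metric.tendsto_nhds.mp (hconv (S i) (F j)) _ (by positivity)
    filter_upwards [e1, e2, e3] with n hn1 hn2 hn3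
    have hin : i ∈ Finset.range (n+1) :=
      Finset.mem_range.mpr (Nat.lt_succ_of_le (le_trans (le_max_left i j) hn1))
    have hjn : j ∈ Finset.range (n+1) :=
      Finset.mem_range.mpr (Nat.lt_succ_of_le (le_trans (le_max_right i j) hn1))
    have T2 : dist (F j (D n (m n) (S i))) (F j (L n (S i))) < ε / 8 :=
      lt_trans (hm2 n i hin j hjn) hn2
    have T1 : dist (f (D n (m n) h)) (F j (D n (m n) (S i))) ≤ ε / 4 :=
      hgeo (D n (m n)) (hDb n (m n))
    have T4 : dist (f (L₀ h)) (F j (L₀ (S i))) ≤ ε / 4 := hgeo L₀ hL0b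
    have tri1 := dist_triangle4 (f (D n (m n) h)) (F j (D n (m n) (S i)))
      (F j (L n (S i))) (F j (L₀ (S i)))
    have tri2 := dist_triangle (f (D n (m n) h)) (F j (L₀ (S i))) (f (L₀ h))
    have T4' : dist (F j (L₀ (S i))) (f (L₀ h)) ≤ ε / 4 := by
      rw [dist_comm]; exact T4
    linarith
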